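/- Let γ ∈ (0,1), set η = γ⁻¹ (so η > 1) and ξ = γ⁻¹ + 1/3, and let T > 0. Let ℓ̄, ℓ̌, ℓ̂ be nonnegative reals satisfying: ℓ̂ ≤ ℓ̄ − (γ/2)·ℓ̌, ℓ̄ ≤ (1+η)·ξ⁻¹·T, and ℓ̌ ≤ η·T. Then ℓ̌ + ℓ̂ < (1+η)·T. -/

import Mathlib

/-- Arithmetic core of the first case (exactly one new job) of
Lemma 8 (second amortized approach, `η = γ⁻¹`, `ξ = γ⁻¹ + 1/3`). -/
theorem second_amortized_one_job_load_bound
    (γ T ℓbar ℓnew ℓold : ℝ)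
    (hγ : γ ∈ Set.Ioo (0 : ℝ) 1)
    (η ξ : ℝ) (hη : η = γ⁻¹) (hξ : ξ = γ⁻¹ + 1/3)
    (hT : 0 < T)
    (hbar : 0 ≤ ℓbar) (hnew : 0 ≤ ℓnew) (hold : 0 ≤ ℓold)
    (h1 : ℓold ≤ ℓbar - (γ / 2) * ℓnew)
    (h2 : ℓbar ≤ (1 + η) * ξ⁻¹ * T)
    (h3 : ℓnew ≤ η * T) :
    ℓnew + ℓold < (1 + η) * T := by
  obtain ⟨hγ0, hγ1⟩ := hγ
  subst hη hξ
  have hγ0' : (0:ℝ) < γ⁻¹ := by positivity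
  have hξ0 : (0:ℝ) < γ⁻¹ + 1/3 := by positivity
  have hinv : (γ⁻¹ + 1/3)⁻¹ = 3 * γ / (3 + γ) := by
    rw [eq_div_iff (by nlinarith)]
    field_simp
  rw [hinv] at h2
  rw [inv_eq_one_div] at h3
  have h5 : (0:ℝ) < 3 + γ := by nlinarith
  have key : (1 + γ⁻¹) * (3 * γ / (3 + γ)) + (1 - γ/2) * (1/γ) < 1 + γ⁻¹ := by
    have hγne : γ ≠ 0 := ne_of_gt hγ0
    have h5ne : 3 + γ ≠ 0 := ne_of_gt h5
    field_simp
    nlinarith [sq_nonneg γ, mul_pos hγ0 hγ0, mul_pos hγ0 h5, mul_pos (mul_pos hγ0 hγ0) hγ0]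
  have h4 : (1 + γ⁻¹) * (3 * γ / (3 + γ)) * T < (1 + γ⁻¹) * T - (1 - γ/2) * ((1/γ) * T) := by
    nlinarith [mul_lt_mul_of_pos_right key hT]
  nlinarith [mul_le_mul_of_nonneg_left h3 (by nlinarith : (0:ℝ) ≤ 1 - γ/2)]
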